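/- Let A and B be finite subsets of E = ℝ^d that are strictly separated by a hyperplane, i.e., there exist a unit vector w and a constant c with ⟪w, a⟫ < c for all a ∈ A and ⟪w, b⟫ > c for all b ∈ B. Then there exist points p, q ∈ E and radii r, s ≥ 0 such that A is contained in the closed ball of radius r about p, B is contained in the closed ball of radius s about q, and the two closed balls are disjoint. -/
import Mathlib


open RealInnerProductSpace

/-- If two finite sets `A` and `B` in Euclidean space are strictly separated by a
hyperplane (with unit normal `w` and offset `c`), then they can be enclosed in two
disjoint closed balls. -/
theorem separated_finsets_in_disjoint_balls (d : ℕ)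
    (A B : Finset (EuclideanSpace ℝ (Fin d)))
    (w : EuclideanSpace ℝ (Fin d)) (hw : ‖w‖ = 1) (c : ℝ)
    (hA : ∀ a ∈ A, ⟪w, a⟫ < c) (hB : ∀ b ∈ B, ⟪w, b⟫ > c) :
    ∃ p q : EuclideanSpace ℝ (Fin d), ∃ r s : ℝ, 0 ≤ r ∧ 0 ≤ s ∧
      ↑A ⊆ Metric.closedBall p r ∧ ↑B ⊆ Metric.closedBall q s ∧
      Disjoint (Metric.closedBall p r) (Metric.closedBall q s) := by
  classical
  obtain ⟨M, hM0, hM⟩ : ∃ M, 0 ≤ M ∧ ∀ x ∈ A ∪ B, ‖x‖ ≤ M := by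
    obtain ⟨M, hM⟩ := ((A ∪ B).image fun x => ‖x‖).exists_le
    exact ⟨max M 0, le_max_right _ _, fun x hx =>
      (hM _ (Finset.mem_image_of_mem _ hx)).trans (le_max_left _ _)⟩
  set S : Finset ℝ := ((A.image fun a => c - ⟪w, a⟫) ∪ (B.image fun b => ⟪w, b⟫ - c)) ∪ {1}
    with hSdef
  have hS : S.Nonempty := ⟨1, by simp [hSdef]⟩
  set ε := S.min' hS with hεdef
  have hεpos : 0 < ε := by
    rw [hεdef, Finset.lt_min'_iff]
    intro x hx
    simp only [hSdef, Finset.mem_union, Finset.mem_image, Finset.mem_singleton] at hx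
    rcases hx with (⟨a, ha, rfl⟩ | ⟨b, hb, rfl⟩) | rfl
    · linarith [hA a ha]
    · linarith [hB b hb]
    · norm_num
  have hε1 : ε ≤ 1 := Finset.min'_le _ 1 (by simp [hSdef])
  have hA' : ∀ a ∈ A, ⟪w, a⟫ ≤ c - ε := fun a ha => by
    have := Finset.min'_le S (c - ⟪w, a⟫) (by
      simp only [hSdef, Finset.mem_union, Finset.mem_image]
      exact Or.inl (Or.inl ⟨a, ha, rfl⟩))
    rw [← hεdef] at this; linarith
  have hB' : ∀ b ∈ B, c + ε ≤ ⟪w, b⟫ := fun b hb => by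
    have := Finset.min'_le S (⟪w, b⟫ - c) (by
      simp only [hSdef, Finset.mem_union, Finset.mem_image]
      exact Or.inl (Or.inr ⟨b, hb, rfl⟩))
    rw [← hεdef] at this; linarith
  set R : ℝ := max ((M ^ 2 + 2 * ε * |c|) / ε) (|c| + 1) with hRdef
  have hRc : |c| + 1 ≤ R := le_max_right _ _
  have hRε : M ^ 2 + 2 * ε * |c| ≤ ε * R := by
    rw [← div_le_iff₀' hεpos]
    exact le_max_left _ _
  have hc1 : -|c| ≤ c := neg_abs_le c
  have hc2 : c ≤ |c| := le_abs_self c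
  have hcnn : 0 ≤ |c| := abs_nonneg c
  have hR1 : 1 ≤ R := by linarith
  have hr0 : 0 ≤ R - ε / 2 := by linarith
  refine ⟨(c - R) • w, (c + R) • w, R - ε / 2, R - ε / 2, hr0, hr0, ?_, ?_, ?_⟩
  · intro a ha
    rw [Finset.mem_coe] at ha
    have haM : ‖a‖ ≤ M := hM a (Finset.mem_union_left _ ha)
    have hwa : ⟪w, a⟫ ≤ c - ε := hA' a ha
    rw [Metric.mem_closedBall, dist_eq_norm]
    have hsq : ‖a - (c - R) • w‖ ^ 2 = ‖a‖ ^ 2 - 2 * ((c - R) * ⟪w, a⟫) + (c - R) ^ 2 := by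
      rw [norm_sub_sq_real, real_inner_smul_right, real_inner_comm, norm_smul, hw]
      simp [mul_pow, sq_abs]
    refine le_of_pow_le_pow_left₀ two_ne_zero hr0 ?_
    rw [hsq]
    nlinarith [mul_nonneg (by linarith : (0:ℝ) ≤ R - c)
      (by linarith : (0:ℝ) ≤ c - ε - ⟪w, a⟫),
      pow_le_pow_left₀ (norm_nonneg a) haM 2,
      mul_nonneg hεpos.le (by linarith : (0:ℝ) ≤ |c| - c), sq_nonneg c, sq_nonneg ε]
  · intro b hb
    rw [Finset.mem_coe] at hb
    have hbM : ‖b‖ ≤ M := hM b (Finset.mem_union_right _ hb)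
    have hwb : c + ε ≤ ⟪w, b⟫ := hB' b hb
    rw [Metric.mem_closedBall, dist_eq_norm]
    have hsq : ‖b - (c + R) • w‖ ^ 2 = ‖b‖ ^ 2 - 2 * ((c + R) * ⟪w, b⟫) + (c + R) ^ 2 := by
      rw [norm_sub_sq_real, real_inner_smul_right, real_inner_comm, norm_smul, hw]
      simp [mul_pow, sq_abs]
    refine le_of_pow_le_pow_left₀ two_ne_zero hr0 ?_
    rw [hsq]
    nlinarith [mul_nonneg (by linarith : (0:ℝ) ≤ c + R)
      (by linarith : (0:ℝ) ≤ ⟪w, b⟫ - (c + ε)),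
      pow_le_pow_left₀ (norm_nonneg b) hbM 2,
      mul_nonneg hεpos.le (by linarith : (0:ℝ) ≤ |c| + c), sq_nonneg c, sq_nonneg ε]
  · apply Metric.closedBall_disjoint_closedBall
    have hpq : (c - R) • w - (c + R) • w = (-(2 * R)) • w := by
      rw [← sub_smul]; ring_nf
    rw [dist_eq_norm, hpq, norm_smul, hw, mul_one, norm_neg, Real.norm_eq_abs,
      abs_of_pos (by linarith : (0:ℝ) < 2 * R)]
    linarith
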